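/- Let A ∈ ℝ^{m×n}, b ∈ ℝ^m with the system Ax = b consistent, and let M ∈ ℝ^{m×m} be symmetric positive definite. For α ∈ (0,2), define T(x) = x + (α / ρ(AᵀMA)) Aᵀ M (b − Ax), where ρ denotes the spectral radius. Then Fix T = {x : Ax = b}, and T is an α-relaxed cutter: α⟨T(x) − x, z − x⟩ ≥ ‖T(x) − x‖² for all x ∈ ℝⁿ and all z with Az = b. -/

import Mathlib

open RealInnerProductSpace Matrix

lemma euclid_inner_symm_dot {n : ℕ} (a c : Fin n → ℝ) :
    ⟪(WithLp.equiv 2 (Fin n → ℝ)).symm a, (WithLp.equiv 2 (Fin n → ℝ)).symm c⟫ = a ⬝ᵥ c := by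
  rw [EuclideanSpace.inner_eq_star_dotProduct, star_trivial]
  exact dotProduct_comm _ _

lemma key_ineq {n : ℕ} (B : Matrix (Fin n) (Fin n) ℝ) (hB : B.IsHermitian)
    (rho : ℝ) (h0 : ∀ i, 0 ≤ hB.eigenvalues i) (h1 : ∀ i, hB.eigenvalues i ≤ rho)
    (v : Fin n → ℝ) :
    (B *ᵥ v) ⬝ᵥ (B *ᵥ v) ≤ rho * ((B *ᵥ v) ⬝ᵥ v) := by
  have hBt : Bᵀ = B := by
    rw [← conjTranspose_eq_transpose_of_trivial]; exact hB
  set e := hB.eigenvectorBasis with he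
  set u : EuclideanSpace ℝ (Fin n) := (WithLp.equiv 2 (Fin n → ℝ)).symm (B *ᵥ v) with hu
  set w : EuclideanSpace ℝ (Fin n) := (WithLp.equiv 2 (Fin n → ℝ)).symm v with hw
  have hcoord : ∀ i, ⟪e i, u⟫ = hB.eigenvalues i * ⟪e i, w⟫ := by
    intro i
    have h2 : B *ᵥ ⇑(e i) = hB.eigenvalues i • ⇑(e i) := hB.mulVec_eigenvectorBasis i
    have h3 : ⟪e i, u⟫ = (⇑(e i)) ⬝ᵥ (B *ᵥ v) := by
      rw [EuclideanSpace.inner_eq_star_dotProduct, star_trivial]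
      exact dotProduct_comm _ _
    have h4 : ⟪e i, w⟫ = (⇑(e i)) ⬝ᵥ v := by
      rw [EuclideanSpace.inner_eq_star_dotProduct, star_trivial]
      exact dotProduct_comm _ _
    rw [h3, h4, dotProduct_mulVec, ← mulVec_transpose, hBt, h2, smul_dotProduct, smul_eq_mul]
  have hcoord2 : ∀ i, ⟪u, e i⟫ = hB.eigenvalues i * ⟪e i, w⟫ := by
    intro i; rw [real_inner_comm]; exact hcoord i
  have hsum1 : ⟪u, u⟫ = ∑ i, (hB.eigenvalues i)^2 * ⟪e i, w⟫^2 := by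
    rw [← OrthonormalBasis.sum_inner_mul_inner e u u]
    refine Finset.sum_congr rfl fun i _ => ?_
    rw [hcoord2 i, hcoord i]; ring
  have hsum2 : ⟪u, w⟫ = ∑ i, hB.eigenvalues i * ⟪e i, w⟫^2 := by
    rw [← OrthonormalBasis.sum_inner_mul_inner e u w]
    refine Finset.sum_congr rfl fun i _ => ?_
    rw [hcoord2 i]; ring
  have goal' : ⟪u, u⟫ ≤ rho * ⟪u, w⟫ := by
    rw [hsum1, hsum2, Finset.mul_sum]
    refine Finset.sum_le_sum fun i _ => ?_
    nlinarith [mul_le_mul_of_nonneg_right (h1 i) (mul_nonneg (h0 i) (sq_nonneg (⟪e i, w⟫)))]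
  have e1 : ⟪u, u⟫ = (B *ᵥ v) ⬝ᵥ (B *ᵥ v) := euclid_inner_symm_dot _ _
  have e2 : ⟪u, w⟫ = (B *ᵥ v) ⬝ᵥ v := euclid_inner_symm_dot _ _
  rw [← e1, ← e2]; exact goal'

lemma pd_zero {k : ℕ} {M : Matrix (Fin k) (Fin k) ℝ} (hM : M.PosDef) (x : Fin k → ℝ)
    (h : x ⬝ᵥ (M *ᵥ x) = 0) : x = 0 := by
  by_contra hx
  have h2 := hM.dotProduct_mulVec_pos hx
  rw [star_trivial] at h2
  exact h2.ne' h

theorem landweber_type_operator_is_relaxed_cutter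
    (m n : ℕ) (A : Matrix (Fin m) (Fin n) ℝ) (b : Fin m → ℝ)
    (hconsistent : ∃ x₀ : EuclideanSpace ℝ (Fin n), A.mulVec x₀ = b)
    (M : Matrix (Fin m) (Fin m) ℝ) (hM : M.PosDef)
    (hHerm : (Aᵀ * M * A).IsHermitian)
    (rho : ℝ) (hrho : rho = ⨆ i, hHerm.eigenvalues i)
    (α : ℝ) (hα : α ∈ Set.Ioo (0 : ℝ) 2)
    (T : EuclideanSpace ℝ (Fin n) → EuclideanSpace ℝ (Fin n))
    (hT : ∀ x, T x = x + (α / rho) • (WithLp.equiv 2 (Fin n → ℝ)).symm ((Aᵀ * M).mulVec (b - A.mulVec x))) :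
    Function.fixedPoints T = {x : EuclideanSpace ℝ (Fin n) | A.mulVec x = b} ∧
      ∀ x z : EuclideanSpace ℝ (Fin n), A.mulVec z = b →
        α * ⟪T x - x, z - x⟫ ≥ ‖T x - x‖ ^ 2 := by
  obtain ⟨x₀, hx₀⟩ := hconsistent
  obtain ⟨hα0, hα2⟩ := hα
  have hBpsd : (Aᵀ * M * A).PosSemidef := by
    have h := hM.posSemidef.conjTranspose_mul_mul_same A
    rwa [conjTranspose_eq_transpose_of_trivial] at h
  have h0 : ∀ i, 0 ≤ hHerm.eigenvalues i := fun i => hBpsd.eigenvalues_nonneg i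
  have h1 : ∀ i, hHerm.eigenvalues i ≤ rho := by
    intro i
    rw [hrho]
    exact le_ciSup (Set.Finite.bddAbove (Set.finite_range _)) i
  have hrho0 : 0 ≤ rho := by
    rcases Nat.eq_zero_or_pos n with h | h
    · subst h
      rw [hrho]
      exact le_of_eq (Real.iSup_of_isEmpty _).symm
    · exact le_trans (h0 ⟨0, h⟩) (h1 ⟨0, h⟩)
  have hkey : ∀ v : Fin n → ℝ,
      ((Aᵀ * M * A) *ᵥ v) ⬝ᵥ ((Aᵀ * M * A) *ᵥ v) ≤ rho * (((Aᵀ * M * A) *ᵥ v) ⬝ᵥ v) :=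
    key_ineq _ hHerm rho h0 h1
  have hquad : ∀ v : Fin n → ℝ, v ⬝ᵥ ((Aᵀ * M * A) *ᵥ v) = (A *ᵥ v) ⬝ᵥ (M *ᵥ (A *ᵥ v)) := by
    intro v
    rw [Matrix.mul_assoc, ← mulVec_mulVec, dotProduct_mulVec, vecMul_transpose, mulVec_mulVec]
  rcases eq_or_lt_of_le hrho0 with hr | hr
  · -- rho = 0 : then A = 0 essentially
    have hA0 : ∀ v : Fin n → ℝ, A *ᵥ v = 0 := by
      intro v
      have h2 := hkey v
      rw [← hr, zero_mul] at h2
      have h3 : (Aᵀ * M * A) *ᵥ v = 0 := by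
        have h4 : ((Aᵀ * M * A) *ᵥ v) ⬝ᵥ ((Aᵀ * M * A) *ᵥ v) = 0 :=
          le_antisymm h2 (Finset.sum_nonneg fun i _ => mul_self_nonneg _)
        exact (dotProduct_self_eq_zero).mp h4
      have h5 : (A *ᵥ v) ⬝ᵥ (M *ᵥ (A *ᵥ v)) = 0 := by
        rw [← hquad, h3, dotProduct_zero]
      exact pd_zero hM _ h5
    have hb0 : b = 0 := by rw [← hx₀]; exact hA0 _
    have hTx : ∀ x, T x = x := by
      intro x
      rw [hT x]
      have h6 : b - A.mulVec x = 0 := by rw [hb0, hA0]; simp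
      rw [h6]
      simp
    constructor
    · ext x
      simp only [Function.mem_fixedPoints, Function.IsFixedPt, Set.mem_setOf_eq, hTx, hA0, hb0]
    · intro x z hz
      rw [hTx]
      simp
  · -- rho > 0
    have hc : 0 < α / rho := div_pos hα0 hr
    constructor
    · ext x
      simp only [Function.mem_fixedPoints, Function.IsFixedPt, Set.mem_setOf_eq]
      constructor
      · intro hfix
        rw [hT x] at hfix
        have h5 : (α / rho) • (WithLp.equiv 2 (Fin n → ℝ)).symm
            ((Aᵀ * M) *ᵥ (b - A.mulVec x)) = 0 := add_eq_left.mp hfix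
        have h6 : (Aᵀ * M) *ᵥ (b - A.mulVec x) = 0 := by
          rcases smul_eq_zero.mp h5 with h | h
          · exact absurd h (ne_of_gt hc)
          · have h7 := congrArg (WithLp.equiv 2 (Fin n → ℝ)) h
            simpa using h7
        have hr2 : b - A.mulVec x = A *ᵥ (x₀ - x) := by
          rw [← hx₀, ← Matrix.mulVec_sub]
        have h7 : (b - A.mulVec x) ⬝ᵥ (M *ᵥ (b - A.mulVec x)) = 0 := by
          have h8 : (x₀ - x) ⬝ᵥ ((Aᵀ * M) *ᵥ (b - A.mulVec x)) = 0 := by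
            rw [h6, dotProduct_zero]
          rw [← mulVec_mulVec, dotProduct_mulVec, vecMul_transpose, WithLp.ofLp_sub, ← hr2] at h8
          exact h8
        have h9 := pd_zero hM _ h7
        have h10 : b - A.mulVec x = 0 := h9
        exact (sub_eq_zero.mp h10).symm
      · intro hAx
        rw [hT x, hAx, sub_self]
        simp
    · intro x z hz
      set w : Fin n → ℝ := WithLp.equiv 2 (Fin n → ℝ) (z - x) with hwdef
      have hbd : b - A.mulVec x = A *ᵥ w := by
        rw [← hz, ← Matrix.mulVec_sub]
        rfl
      have hTx : T x - x = (α / rho) • (WithLp.equiv 2 (Fin n → ℝ)).symm ((Aᵀ * M * A) *ᵥ w) := by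
        rw [hT x, add_sub_cancel_left, hbd, mulVec_mulVec]
      have hzx : (z - x : EuclideanSpace ℝ (Fin n)) = (WithLp.equiv 2 (Fin n → ℝ)).symm w := rfl
      rw [hTx, hzx, real_inner_smul_left, euclid_inner_symm_dot, norm_smul, mul_pow,
        Real.norm_eq_abs, sq_abs, ← real_inner_self_eq_norm_sq, euclid_inner_symm_dot]
      have h8 := mul_le_mul_of_nonneg_left (hkey w) (sq_nonneg (α / rho))
      have h9 : (α / rho) ^ 2 * (rho * (((Aᵀ * M * A) *ᵥ w) ⬝ᵥ w)) =
          α * ((α / rho) * (((Aᵀ * M * A) *ᵥ w) ⬝ᵥ w)) := by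
        field_simp
      linarith
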